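/- For all natural numbers a, b, c: the sum over i from 0 to c of C(i,a)·C(i,b) equals the sum over j ≥ 0 of C(c+j+1, a+b+1)·C(a,j)·C(b,j). -/

import Mathlib

open Finset

-- unconditional chain rule for binomials
lemma chain (n k s : ℕ) (hsk : s ≤ k) :
    n.choose k * k.choose s = n.choose s * (n - s).choose (k - s) := by
  rcases le_or_gt k n with h | h
  · exact Nat.choose_mul hsk
  · rw [Nat.choose_eq_zero_of_lt h, Nat.zero_mul]
    rcases le_or_gt s n with hs | hs
    · rw [Nat.choose_eq_zero_of_lt (by omega : n - s < k - s), Nat.mul_zero]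
    · rw [Nat.choose_eq_zero_of_lt hs, Nat.zero_mul]

-- Vandermonde in a shifted form
lemma sub1 (A B k : ℕ) :
    ∑ m ∈ range (A + 1), A.choose m * B.choose (k + m) = (A + B).choose (A + k) := by
  rw [Nat.add_choose_eq, Finset.Nat.sum_antidiagonal_eq_sum_range_succ_mk,
    ← Finset.sum_range_reflect,
    ← Finset.sum_subset (Finset.range_subset_range.2 (by omega : A + 1 ≤ A + k + 1))
      (fun x hx hnx => ?_)]
  · refine Finset.sum_congr rfl fun m hm => ?_
    simp only [mem_range] at hm
    have hm' : m ≤ A := by omega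
    rw [show A + 1 - 1 - m = A - m from by omega, Nat.choose_symm hm',
      show k + (A - m) = A + k - m from by omega]
  · simp only [mem_range] at hx hnx
    rw [Nat.choose_eq_zero_of_lt (by omega : A < x), Nat.zero_mul]

lemma innerS (a b l : ℕ) :
    ∑ j ∈ range (min a b + 1), a.choose j * b.choose j * j.choose l
    = a.choose l * (a + b - l).choose a := by
  have hmc := min_choice a b
  have hml := min_le_left a b
  have hmr := min_le_right a b
  rcases le_or_gt l (min a b) with hl | hl
  · have hla : l ≤ a := le_trans hl hml
    rw [range_eq_Ico, ← Finset.sum_Ico_consecutive _ (Nat.zero_le l)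
        (by omega : l ≤ min a b + 1),
      Finset.sum_eq_zero (fun j hj => by
        rw [Nat.choose_eq_zero_of_lt (mem_Ico.1 hj).2, Nat.mul_zero]),
      Nat.zero_add, Finset.sum_Ico_eq_sum_range]
    have step : ∀ m ∈ range (min a b + 1 - l),
        a.choose (l + m) * b.choose (l + m) * (l + m).choose l
        = a.choose l * ((a - l).choose m * b.choose (l + m)) := by
      intro m _
      rw [mul_right_comm, chain a (l + m) l (Nat.le_add_right l m),
        show l + m - l = m from by omega, mul_assoc]
    rw [Finset.sum_congr rfl step, ← Finset.mul_sum]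
    congr 1
    rw [Finset.sum_subset (Finset.range_subset_range.2
        (by omega : min a b + 1 - l ≤ a - l + 1)) (fun x hx hnx => by
      simp only [mem_range] at hx hnx
      rw [Nat.choose_eq_zero_of_lt (by omega : b < l + x), Nat.mul_zero]),
      sub1 (a - l) b l, show a - l + l = a from by omega,
      show a - l + b = a + b - l from by omega]
  · rw [Finset.sum_eq_zero (fun j hj => by
      rw [Nat.choose_eq_zero_of_lt (by simp only [mem_range] at hj; omega : j < l),
        Nat.mul_zero])]
    rcases le_or_gt l a with hla | hla
    · rw [Nat.choose_eq_zero_of_lt (by omega : a + b - l < a), Nat.mul_zero]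
    · rw [Nat.choose_eq_zero_of_lt hla, Nat.zero_mul]

lemma key (n a b : ℕ) :
    n.choose a * n.choose b
    = ∑ j ∈ range (min a b + 1), (n + j).choose (a + b) * a.choose j * b.choose j := by
  have expand : ∀ j : ℕ, (n + j).choose (a + b)
      = ∑ l ∈ range (a + b + 1), j.choose l * n.choose (a + b - l) := by
    intro j
    rw [Nat.add_comm n j, Nat.add_choose_eq, Finset.Nat.sum_antidiagonal_eq_sum_range_succ_mk]
  symm
  calc ∑ j ∈ range (min a b + 1), (n + j).choose (a + b) * a.choose j * b.choose j
      = ∑ j ∈ range (min a b + 1), ∑ l ∈ range (a + b + 1),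
          n.choose (a + b - l) * (a.choose j * b.choose j * j.choose l) := by
        refine Finset.sum_congr rfl fun j _ => ?_
        rw [expand j, Finset.sum_mul, Finset.sum_mul]
        exact Finset.sum_congr rfl fun l _ => by ring
    _ = ∑ l ∈ range (a + b + 1), n.choose (a + b - l) *
          ∑ j ∈ range (min a b + 1), a.choose j * b.choose j * j.choose l := by
        rw [Finset.sum_comm]
        exact Finset.sum_congr rfl fun l _ => by rw [Finset.mul_sum]
    _ = ∑ l ∈ range (a + b + 1), n.choose (a + b - l) *
          (a.choose l * (a + b - l).choose a) :=
        Finset.sum_congr rfl fun l _ => by rw [innerS]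
    _ = ∑ l ∈ range (b + 1), n.choose (a + b - l) *
          (a.choose l * (a + b - l).choose a) := by
        symm
        apply Finset.sum_subset (Finset.range_subset_range.2 (by omega))
        intro x hx hnx
        simp only [mem_range] at hx hnx
        rcases Nat.eq_zero_or_pos a with ha | ha
        · subst ha
          rw [Nat.choose_eq_zero_of_lt (show 0 < x by omega)]
          ring
        · rw [Nat.choose_eq_zero_of_lt (show a + b - x < a by omega)]
          ring
    _ = ∑ l ∈ range (b + 1), n.choose a * (a.choose l * (n - a).choose (b - l)) := by
        refine Finset.sum_congr rfl fun l hl => ?_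
        simp only [mem_range] at hl
        rw [mul_comm (a.choose l), ← mul_assoc, chain n (a + b - l) a (by omega),
          show a + b - l - a = b - l from by omega]
        ring
    _ = n.choose a * ∑ l ∈ range (b + 1), a.choose l * (n - a).choose (b - l) := by
        rw [Finset.mul_sum]
    _ = n.choose a * (a + (n - a)).choose b := by
        rw [Nat.add_choose_eq, Finset.Nat.sum_antidiagonal_eq_sum_range_succ_mk]
    _ = n.choose a * n.choose b := by
        rcases le_or_gt a n with h | h
        · rw [Nat.add_sub_cancel' h]
        · rw [Nat.choose_eq_zero_of_lt h, Nat.zero_mul, Nat.zero_mul]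

/-- The sum over `i` from `0` to `c` of `C(i,a)·C(i,b)` equals the sum over `j ≥ 0`
(finite, since terms vanish for `j > min a b`) of `C(c+j+1, a+b+1)·C(a,j)·C(b,j)`. -/
theorem stmt1 (a b c : ℕ) :
    ∑ i ∈ Finset.range (c + 1), i.choose a * i.choose b
    = ∑ j ∈ Finset.range (min a b + 1),
        (c + j + 1).choose (a + b + 1) * a.choose j * b.choose j := by
  have hml := min_le_left a b
  have hmr := min_le_right a b
  induction c with
  | zero =>
    rw [Finset.sum_range_one]
    rcases Nat.eq_zero_or_pos (a + b) with h | h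
    · have ha : a = 0 := by omega
      have hb : b = 0 := by omega
      subst ha; subst hb; simp
    · rw [Finset.sum_eq_zero (fun j hj => by
        simp only [mem_range] at hj
        rw [Nat.choose_eq_zero_of_lt (show 0 + j + 1 < a + b + 1 by omega),
          Nat.zero_mul, Nat.zero_mul])]
      rcases Nat.eq_zero_or_pos a with ha | ha
      · rw [Nat.choose_eq_zero_of_lt (show (0:ℕ) < b by omega), Nat.mul_zero]
      · rw [Nat.choose_eq_zero_of_lt ha, Nat.zero_mul]
  | succ c ih =>
    rw [Finset.sum_range_succ, ih, key (c + 1) a b, ← Finset.sum_add_distrib]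
    refine Finset.sum_congr rfl fun j hj => ?_
    have h : (c + 1 + j + 1).choose (a + b + 1)
        = (c + j + 1).choose (a + b + 1) + (c + 1 + j).choose (a + b) := by
      rw [show c + 1 + j + 1 = (c + j + 1) + 1 from by omega, Nat.choose_succ_succ,
        show c + 1 + j = c + j + 1 from by omega, Nat.add_comm]
    rw [h, Nat.add_mul, Nat.add_mul]
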